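/- (Linear convergence of gradient-learning updates.) Let L > 0, α > 0, and η = 1/(8L). Suppose f_0, f_1, …, f_T : X → (0,1) is a sequence of measurable hypotheses with ℓ_D(f_t;y) finite for all t, such that for each t < T, f_{t+1} is the multiplicative-weights update of f_t by some measurable h_t : X → ℝ with step η, where |η·h_t(x)| ≤ 1 for all x, E[h_t(x)²] ≤ L·ℓ_D(f_t;y), and E[h_t(x)·(f_t(x) − y(x))] ≥ (1/4)·ℓ_D(f_t;y). Then ℓ_D(f_T;y) ≤ e^{−T/(64L)}·ℓ_D(f_0;y); in particular, if ℓ_D(f_0;y) > α and T ≥ 64·L·log(ℓ_D(f_0;y)/α), then ℓ_D(f_T;y) ≤ α. -/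

import Mathlib

open MeasureTheory

lemma exp_le_one_add_add_sq {u : ℝ} (hu : |u| ≤ 1) : Real.exp u ≤ 1 + u + u ^ 2 := by
  have h := Real.exp_bound hu (n := 2) (by norm_num)
  have h2 : |Real.exp u - (1 + u)| ≤ u ^ 2 * (3 / (2 * 2)) := by
    simpa [Finset.sum_range_succ] using h
  have := abs_le.1 h2
  nlinarith [sq_nonneg u]

lemma mw_pointwise (a yv u : ℝ) (ha0 : 0 < a) (ha1 : a < 1) (hu : |u| ≤ 1) :
    -yv * Real.log (a * Real.exp (-u) / (1 - a + a * Real.exp (-u)))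
      - (1 - yv) * Real.log (1 - a * Real.exp (-u) / (1 - a + a * Real.exp (-u)))
    ≤ -yv * Real.log a - (1 - yv) * Real.log (1 - a) - (u * (a - yv)) + u ^ 2 := by
  have he0 : 0 < Real.exp (-u) := Real.exp_pos _
  have hZ : 0 < 1 - a + a * Real.exp (-u) := by nlinarith
  have hlogb : Real.log (a * Real.exp (-u) / (1 - a + a * Real.exp (-u)))
      = Real.log a + (-u) - Real.log (1 - a + a * Real.exp (-u)) := by
    rw [Real.log_div (by positivity) (ne_of_gt hZ),
      Real.log_mul (ne_of_gt ha0) (ne_of_gt he0), Real.log_exp]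
  have h1b : 1 - a * Real.exp (-u) / (1 - a + a * Real.exp (-u))
      = (1 - a) / (1 - a + a * Real.exp (-u)) := by
    field_simp
    ring
  have hlog1b : Real.log (1 - a * Real.exp (-u) / (1 - a + a * Real.exp (-u)))
      = Real.log (1 - a) - Real.log (1 - a + a * Real.exp (-u)) := by
    rw [h1b, Real.log_div (by linarith) (ne_of_gt hZ)]
  rw [hlogb, hlog1b]
  have hle : Real.log (1 - a + a * Real.exp (-u)) ≤ (1 - a + a * Real.exp (-u)) - 1 :=
    Real.log_le_sub_one_of_pos hZ
  have hee : Real.exp (-u) ≤ 1 - u + u ^ 2 := by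
    have := exp_le_one_add_add_sq (u := -u) (by rwa [abs_neg])
    nlinarith
  nlinarith [sq_nonneg u]

/-- Linear convergence of gradient-learning multiplicative-weights updates
(Proposition 2 of the paper). -/
theorem mw_gradient_linear_convergence
    {X : Type*} [MeasurableSpace X] (D : Measure X) [IsProbabilityMeasure D]
    (y : X → ℝ) (hy : Measurable y) (hy01 : ∀ x, y x = 0 ∨ y x = 1)
    (L α η : ℝ) (hL : 0 < L) (hα : 0 < α) (hη : η = 1 / (8 * L))
    (T : ℕ) (f : ℕ → X → ℝ) (h : ℕ → X → ℝ)
    (hfm : ∀ t ≤ T, Measurable (f t))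
    (hf01 : ∀ t ≤ T, ∀ x, f t x ∈ Set.Ioo (0 : ℝ) 1)
    (hℓ : ∀ t ≤ T,
      Integrable (fun x => -(y x) * Real.log (f t x) - (1 - y x) * Real.log (1 - f t x)) D)
    (hhm : ∀ t < T, Measurable (h t))
    (hηh : ∀ t < T, ∀ x, |η * h t x| ≤ 1)
    (hh2 : ∀ t < T, ∫ x, (h t x)^2 ∂D
      ≤ L * ∫ x, (-(y x) * Real.log (f t x) - (1 - y x) * Real.log (1 - f t x)) ∂D)
    (hcorr : ∀ t < T, ∫ x, h t x * (f t x - y x) ∂D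
      ≥ (1/4) * ∫ x, (-(y x) * Real.log (f t x) - (1 - y x) * Real.log (1 - f t x)) ∂D)
    (hupd : ∀ t < T, ∀ x,
      f (t + 1) x = f t x * Real.exp (-η * h t x) / (1 - f t x + f t x * Real.exp (-η * h t x))) :
    (∫ x, (-(y x) * Real.log (f T x) - (1 - y x) * Real.log (1 - f T x)) ∂D
        ≤ Real.exp (-(T : ℝ) / (64 * L))
          * ∫ x, (-(y x) * Real.log (f 0 x) - (1 - y x) * Real.log (1 - f 0 x)) ∂D)
    ∧ ((α < ∫ x, (-(y x) * Real.log (f 0 x) - (1 - y x) * Real.log (1 - f 0 x)) ∂D) →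
        (64 * L * Real.log
            ((∫ x, (-(y x) * Real.log (f 0 x) - (1 - y x) * Real.log (1 - f 0 x)) ∂D) / α)
          ≤ (T : ℝ)) →
        ∫ x, (-(y x) * Real.log (f T x) - (1 - y x) * Real.log (1 - f T x)) ∂D ≤ α) := by
  have hη0 : 0 < η := by rw [hη]; positivity
  set ℓ : ℕ → ℝ :=
    fun t => ∫ x, (-(y x) * Real.log (f t x) - (1 - y x) * Real.log (1 - f t x)) ∂D with hℓdef
  -- nonnegativity of losses
  have hℓ0 : ∀ t, t ≤ T → 0 ≤ ℓ t := by
    intro t ht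
    apply integral_nonneg
    intro x
    simp only [Pi.zero_apply]
    obtain ⟨hf0, hf1⟩ := hf01 t ht x
    rcases hy01 x with h0 | h1
    · have : Real.log (1 - f t x) ≤ 0 := Real.log_nonpos (by linarith) (by linarith)
      simp only [h0]
      nlinarith
    · have : Real.log (f t x) ≤ 0 := Real.log_nonpos (by linarith) (by linarith)
      simp only [h1]
      nlinarith
  -- one-step contraction
  have step : ∀ t, t < T → ℓ (t + 1) ≤ Real.exp (-(1 / (64 * L))) * ℓ t := by
    intro t htT
    have ht : t ≤ T := le_of_lt htT
    have ht1 : t + 1 ≤ T := htT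
    -- h is bounded
    have hη8 : η * (8 * L) = 1 := by rw [hη]; field_simp
    have hb : ∀ x, |h t x| ≤ 8 * L := by
      intro x
      have h1 := hηh t htT x
      rw [abs_mul, abs_of_pos hη0] at h1
      rw [← hη8] at h1
      exact (mul_le_mul_iff_right₀ hη0).1 h1
    have ihf : Integrable (fun x => h t x * (f t x - y x)) D := by
      refine ⟨((hhm t htT).mul ((hfm t ht).sub hy)).aestronglyMeasurable, ?_⟩
      apply HasFiniteIntegral.of_bounded (C := 8 * L)
      filter_upwards with x
      obtain ⟨hf0, hf1⟩ := hf01 t ht x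
      have h1 := hb x
      have h2 : |f t x - y x| ≤ 1 := by
        rcases hy01 x with h0 | h0 <;> rw [h0, abs_le] <;> constructor <;> linarith
      rw [Real.norm_eq_abs, abs_mul]
      nlinarith [abs_nonneg (h t x), abs_nonneg (f t x - y x)]
    have ih2 : Integrable (fun x => (h t x) ^ 2) D := by
      refine ⟨((hhm t htT).pow measurable_const).aestronglyMeasurable, ?_⟩
      apply HasFiniteIntegral.of_bounded (C := (8 * L) ^ 2)
      filter_upwards with x
      have h1 := hb x
      rw [Real.norm_eq_abs, abs_of_nonneg (sq_nonneg _)]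
      nlinarith [abs_nonneg (h t x), sq_abs (h t x)]
    -- pointwise inequality
    have hmono : (fun x => -(y x) * Real.log (f (t + 1) x)
          - (1 - y x) * Real.log (1 - f (t + 1) x))
        ≤ fun x => (-(y x) * Real.log (f t x) - (1 - y x) * Real.log (1 - f t x))
          - η * (h t x * (f t x - y x)) + η ^ 2 * (h t x) ^ 2 := by
      intro x
      obtain ⟨hf0, hf1⟩ := hf01 t ht x
      have hkey := mw_pointwise (f t x) (y x) (η * h t x) hf0 hf1 (hηh t htT x)
      have harg : -η * h t x = -(η * h t x) := by ring
      have e1 : η * h t x * (f t x - y x) = η * (h t x * (f t x - y x)) := by ring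
      have e2 : (η * h t x) ^ 2 = η ^ 2 * (h t x) ^ 2 := by ring
      rw [e1, e2] at hkey
      dsimp only
      rw [hupd t htT x, harg]
      linarith [hkey]
    have hintRHS : Integrable (fun x => (-(y x) * Real.log (f t x)
        - (1 - y x) * Real.log (1 - f t x))
        - η * (h t x * (f t x - y x)) + η ^ 2 * (h t x) ^ 2) D :=
      ((hℓ t ht).sub (ihf.const_mul η)).add (ih2.const_mul (η ^ 2))
    have iB : Integrable (fun x => η * (h t x * (f t x - y x))) D := ihf.const_mul η
    have iC : Integrable (fun x => η ^ 2 * (h t x) ^ 2) D := ih2.const_mul (η ^ 2)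
    have i1 : Integrable (fun x => (-(y x) * Real.log (f t x)
        - (1 - y x) * Real.log (1 - f t x)) - η * (h t x * (f t x - y x))) D :=
      (hℓ t ht).sub iB
    have hint : ℓ (t + 1) ≤ ℓ t - η * ∫ x, h t x * (f t x - y x) ∂D
        + η ^ 2 * ∫ x, (h t x) ^ 2 ∂D := by
      have h1 := integral_mono (hℓ (t + 1) ht1) hintRHS hmono
      rwa [integral_add i1 iC, integral_sub (hℓ t ht) iB,
        integral_const_mul, integral_const_mul] at h1
    have hc := hcorr t htT
    have hq := hh2 t htT
    have A : η * ((1 / 4) * ℓ t) ≤ η * ∫ x, h t x * (f t x - y x) ∂D :=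
      mul_le_mul_of_nonneg_left hc hη0.le
    have B : η ^ 2 * ∫ x, (h t x) ^ 2 ∂D ≤ η ^ 2 * (L * ℓ t) :=
      mul_le_mul_of_nonneg_left hq (sq_nonneg η)
    have hq2 : η ^ 2 * (L * ℓ t) = η / 8 * ℓ t := by
      rw [hη]; field_simp
    have hlin : ℓ (t + 1) ≤ (1 - η / 8) * ℓ t := by nlinarith
    have h64 : η / 8 = 1 / (64 * L) := by rw [hη]; field_simp; ring
    have hexp : 1 - 1 / (64 * L) ≤ Real.exp (-(1 / (64 * L))) := by
      have := Real.add_one_le_exp (-(1 / (64 * L))); linarith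
    calc ℓ (t + 1) ≤ (1 - 1 / (64 * L)) * ℓ t := by rw [← h64]; exact hlin
      _ ≤ Real.exp (-(1 / (64 * L))) * ℓ t :=
        mul_le_mul_of_nonneg_right hexp (hℓ0 t ht)
  -- induction
  have main : ∀ t, t ≤ T → ℓ t ≤ Real.exp (-(1 / (64 * L))) ^ t * ℓ 0 := by
    intro t
    induction t with
    | zero => intro _; simp
    | succ n ih =>
      intro hn
      have hn' : n < T := Nat.lt_of_succ_le hn
      have h1 := step n hn'
      have h2 := ih hn'.le
      calc ℓ (n + 1) ≤ Real.exp (-(1 / (64 * L))) * ℓ n := h1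
        _ ≤ Real.exp (-(1 / (64 * L))) * (Real.exp (-(1 / (64 * L))) ^ n * ℓ 0) :=
          mul_le_mul_of_nonneg_left h2 (Real.exp_pos _).le
        _ = Real.exp (-(1 / (64 * L))) ^ (n + 1) * ℓ 0 := by ring
  have hpow : Real.exp (-(1 / (64 * L))) ^ T = Real.exp (-(T : ℝ) / (64 * L)) := by
    rw [← Real.exp_nat_mul]
    congr 1
    ring
  have hmain : ℓ T ≤ Real.exp (-(T : ℝ) / (64 * L)) * ℓ 0 := by
    rw [← hpow]; exact main T le_rfl
  refine ⟨hmain, ?_⟩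
  intro hαℓ hT
  have hℓ0pos : 0 < ℓ 0 := lt_trans hα hαℓ
  have hdiv : 0 < ℓ 0 / α := by positivity
  have hlog : Real.log (ℓ 0 / α) ≤ (T : ℝ) / (64 * L) := by
    rw [le_div_iff₀ (by positivity)]
    linarith [hT]
  have hexp2 : Real.exp (-(T : ℝ) / (64 * L)) ≤ α / ℓ 0 := by
    have h1 : -(T : ℝ) / (64 * L) ≤ -Real.log (ℓ 0 / α) := by
      rw [neg_div]; linarith
    calc Real.exp (-(T : ℝ) / (64 * L)) ≤ Real.exp (-Real.log (ℓ 0 / α)) :=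
        Real.exp_le_exp.2 h1
      _ = α / ℓ 0 := by
        rw [Real.exp_neg, Real.exp_log hdiv]
        rw [inv_div]
  calc ℓ T ≤ Real.exp (-(T : ℝ) / (64 * L)) * ℓ 0 := hmain
    _ ≤ (α / ℓ 0) * ℓ 0 := mul_le_mul_of_nonneg_right hexp2 hℓ0pos.le
    _ = α := by field_simp
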